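/- Let d ≥ 1, let P ⊆ {1,…,d}, and let x = (x_1,…,x_d) be uniform on {−1,1}^d. Independently of x, let c = (c_1,…,c_d) ∈ {0,1}^d have independent coordinates with q_i := Pr(c_i = 1[i∈P]) ∈ (0,1] for each i (the probability that coordinate i is selected 'correctly'). Let V be the event that ∏_{i : c_i = 1} x_i = ∏_{i ∈ P} x_i. Then for every s ∈ {1,…,d}: Pr(V | c_s = 1[s∈P]) = (1/2)·(1 + ∏_{i ≠ s} q_i) and Pr(V | c_s ≠ 1[s∈P]) = 1/2 (the latter requiring q_s < 1 so the conditioning event has positive probability). Consequently, the task-advantage ratio of the correct choice at step s equals 1 + ∏_{i≠s} q_i, and in the uniform case q_i = 1/2 for all i it equals 1 + 2^{−(d−1)} at every step s. -/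

import Mathlib

noncomputable section

namespace Stmt2

open Finset

/-- Sample space: the input `x : Fin d → ℤˣ` (a point of the cube `{−1,1}^d`)
together with the selection pattern `c : Fin d → Bool`. -/
abbrev Omega (d : ℕ) := (Fin d → ℤˣ) × (Fin d → Bool)

/-- Density: `x` is uniform on the cube, and independently each coordinate `i` is
selected *correctly* (`c i = 1[i ∈ P]`) with probability `q i`. -/
def w {d : ℕ} (P : Finset (Fin d)) (q : Fin d → ℝ) (ω : Omega d) : ℝ :=
  ((1 : ℝ) / 2) ^ d * ∏ i, (if ω.2 i = decide (i ∈ P) then q i else 1 - q i)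

/-- Probability of an event. -/
def Pr {d : ℕ} (P : Finset (Fin d)) (q : Fin d → ℝ) (E : Set (Omega d)) : ℝ :=
  ∑ ω : Omega d, Set.indicator E (w P q) ω

/-- The verifier accepts: the parity of the selected bits equals the parity over `P`. -/
def Vev {d : ℕ} (P : Finset (Fin d)) : Set (Omega d) :=
  {ω | ∏ i ∈ univ.filter (fun i => ω.2 i = true), ω.1 i = ∏ i ∈ P, ω.1 i}

/-- The event that coordinate `s` is selected correctly, `c_s = 1[s ∈ P]`. -/
def Aev {d : ℕ} (P : Finset (Fin d)) (s : Fin d) : Set (Omega d) :=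
  {ω | ω.2 s = decide (s ∈ P)}

/-! ### Auxiliary lemmas -/

section Aux

variable {d : ℕ}

/-- Sum over functions of a product equals product of sums. -/
lemma sum_fun_prod {α : Type*} [Fintype α] [DecidableEq α] {β : α → Type*}
    [∀ i, Fintype (β i)] (g : ∀ i, β i → ℝ) :
    ∑ f : (∀ i, β i), ∏ i, g i (f i) = ∏ i, ∑ b, g i b :=
  (Fintype.prod_sum g).symm

lemma sum_bool_prod (g : Fin d → Bool → ℝ) :
    ∑ c : Fin d → Bool, ∏ i, g i (c i) = ∏ i, (g i true + g i false) := by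
  rw [sum_fun_prod g]
  refine Finset.prod_congr rfl fun i _ => ?_
  simp

lemma units_eq_iff_mul (a b : ℤˣ) : a = b ↔ a * b = 1 := by
  constructor
  · rintro rfl; exact Int.units_mul_self a
  · intro h
    calc a = a * (b * b) := by rw [Int.units_mul_self, mul_one]
    _ = (a * b) * b := by rw [mul_assoc]
    _ = b := by rw [h, one_mul]

lemma sum_units (g : ℤˣ → ℝ) : ∑ u : ℤˣ, g u = g 1 + g (-1) := by
  have : (univ : Finset ℤˣ) = {1, -1} := by decide
  rw [this, Finset.sum_insert (by decide), Finset.sum_singleton]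

lemma prod_symmDiff (x : Fin d → ℤˣ) (S T : Finset (Fin d)) :
    (∏ i ∈ S, x i) * ∏ i ∈ T, x i = ∏ i ∈ symmDiff S T, x i := by
  have h2 : symmDiff S T = (S ∪ T) \ (S ∩ T) := symmDiff_eq_sup_sdiff_inf S T
  have h3 : (∏ i ∈ (S ∪ T) \ (S ∩ T), x i) * ∏ i ∈ S ∩ T, x i = ∏ i ∈ S ∪ T, x i :=
    Finset.prod_sdiff Finset.inter_subset_union
  have h1 : (∏ i ∈ S ∪ T, x i) * ∏ i ∈ S ∩ T, x i = (∏ i ∈ S, x i) * ∏ i ∈ T, x i :=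
    Finset.prod_union_inter
  calc (∏ i ∈ S, x i) * ∏ i ∈ T, x i
      = (∏ i ∈ S ∪ T, x i) * ∏ i ∈ S ∩ T, x i := h1.symm
    _ = ((∏ i ∈ (S ∪ T) \ (S ∩ T), x i) * ∏ i ∈ S ∩ T, x i) * ∏ i ∈ S ∩ T, x i := by rw [h3]
    _ = (∏ i ∈ (S ∪ T) \ (S ∩ T), x i) * ((∏ i ∈ S ∩ T, x i) * ∏ i ∈ S ∩ T, x i) := by
        rw [mul_assoc]
    _ = ∏ i ∈ symmDiff S T, x i := by rw [Int.units_mul_self, mul_one, h2]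

lemma parity_iff (P : Finset (Fin d)) (x : Fin d → ℤˣ) (c : Fin d → Bool) :
    (∏ i ∈ univ.filter (fun i => c i = true), x i = ∏ i ∈ P, x i)
      ↔ (∏ i ∈ univ.filter (fun i => ¬ (c i = decide (i ∈ P))), x i = 1) := by
  classical
  have hD : univ.filter (fun i => ¬ (c i = decide (i ∈ P)))
      = symmDiff (univ.filter (fun i => c i = true)) P := by
    ext i
    simp only [Finset.mem_symmDiff, mem_filter, mem_univ, true_and]
    cases hc : c i <;> by_cases hP : i ∈ P <;> simp [hc, hP]
  rw [units_eq_iff_mul, prod_symmDiff, hD]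

lemma count_parity (E : Finset (Fin d)) (hE : E.Nonempty) :
    ∑ x : Fin d → ℤˣ, (if ∏ i ∈ E, x i = 1 then (1 : ℝ) else 0) = 2 ^ d / 2 := by
  classical
  have key : ∀ x : Fin d → ℤˣ, (if ∏ i ∈ E, x i = 1 then (1 : ℝ) else 0)
      = (∏ _i : Fin d, (1 : ℝ) + ∏ i, (if i ∈ E then ((x i : ℤ) : ℝ) else 1)) / 2 := by
    intro x
    have hc : ∏ i, (if i ∈ E then ((x i : ℤ) : ℝ) else 1)
        = ((((∏ i ∈ E, x i : ℤˣ) : ℤ) : ℝ)) := by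
      rw [Finset.prod_ite_mem, univ_inter]
      push_cast
      rfl
    rcases Int.units_eq_one_or (∏ i ∈ E, x i) with h | h <;>
      simp [h, hc]
  rw [Finset.sum_congr rfl (fun x _ => key x), ← Finset.sum_div, Finset.sum_add_distrib]
  have h1 : ∑ x : Fin d → ℤˣ, ∏ _i : Fin d, (1 : ℝ) = 2 ^ d := by
    rw [sum_fun_prod (fun (_ : Fin d) (_ : ℤˣ) => (1 : ℝ))]
    rw [Finset.prod_congr rfl (fun i _ => sum_units (fun _ => (1 : ℝ)))]
    norm_num
  have h2 : ∑ x : Fin d → ℤˣ, ∏ i, (if i ∈ E then ((x i : ℤ) : ℝ) else 1) = 0 := by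
    rw [sum_fun_prod (fun (i : Fin d) (u : ℤˣ) => if i ∈ E then ((u : ℤ) : ℝ) else 1)]
    apply Finset.prod_eq_zero (mem_univ hE.choose)
    rw [sum_units (fun u => if hE.choose ∈ E then ((u : ℤ) : ℝ) else 1)]
    simp [hE.choose_spec]
  rw [h1, h2, add_zero]

lemma sum_one_cube : ∑ _x : Fin d → ℤˣ, (1 : ℝ) = 2 ^ d := by
  have : ∑ _x : Fin d → ℤˣ, (1 : ℝ) = ∑ x : Fin d → ℤˣ, ∏ _i : Fin d, (1 : ℝ) := by
    simp
  rw [this, sum_fun_prod (fun (_ : Fin d) (_ : ℤˣ) => (1 : ℝ)),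
    Finset.prod_congr rfl (fun i _ => sum_units (fun _ => (1 : ℝ)))]
  norm_num

end Aux

/-! ### The c-marginal weight -/

/-- Weight of a selection pattern `c`. -/
def F {d : ℕ} (P : Finset (Fin d)) (q : Fin d → ℝ) (c : Fin d → Bool) : ℝ :=
  ∏ i, (if c i = decide (i ∈ P) then q i else 1 - q i)

/-- The all-correct pattern. -/
def c0 {d : ℕ} (P : Finset (Fin d)) : Fin d → Bool := fun i => decide (i ∈ P)

section Marginals

variable {d : ℕ} (P : Finset (Fin d)) (q : Fin d → ℝ)

lemma F_c0 : F P q (c0 P) = ∏ i, q i := by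
  unfold F c0
  exact Finset.prod_congr rfl fun i _ => if_pos rfl

lemma sum_x_w (c : Fin d → Bool) :
    ∑ x : Fin d → ℤˣ, w P q (x, c) = F P q c := by
  have h : ∑ x : Fin d → ℤˣ, w P q (x, c)
      = (∑ _x : Fin d → ℤˣ, (1 : ℝ)) * (((1 : ℝ) / 2) ^ d * F P q c) := by
    rw [Finset.sum_mul]
    exact Finset.sum_congr rfl fun x _ => by rw [one_mul]; rfl
  rw [h, sum_one_cube, ← mul_assoc, ← mul_pow]
  norm_num

lemma sum_x_V (c : Fin d → Bool) :
    ∑ x : Fin d → ℤˣ, Set.indicator (Vev P) (w P q) (x, c)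
      = (if c = c0 P then 1 else (1 : ℝ) / 2) * F P q c := by
  classical
  set D : Finset (Fin d) := univ.filter (fun i => ¬ (c i = decide (i ∈ P))) with hDdef
  have key : ∀ x : Fin d → ℤˣ, Set.indicator (Vev P) (w P q) (x, c)
      = (if ∏ i ∈ D, x i = 1 then (1 : ℝ) else 0) * (((1 : ℝ) / 2) ^ d * F P q c) := by
    intro x
    rw [Set.indicator_apply]
    by_cases h : ∏ i ∈ D, x i = 1
    · have hm : (x, c) ∈ Vev P := (parity_iff P x c).mpr h
      rw [if_pos hm, if_pos h, one_mul]; rfl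
    · have hm : (x, c) ∉ Vev P := fun hh => h ((parity_iff P x c).mp hh)
      rw [if_neg hm, if_neg h, zero_mul]
  rw [Finset.sum_congr rfl fun x _ => key x, ← Finset.sum_mul]
  by_cases hc : c = c0 P
  · have hD : D = ∅ := by
      rw [hDdef]
      apply Finset.filter_eq_empty_iff.mpr
      intro i _
      simp [hc, c0]
    have : ∑ x : Fin d → ℤˣ, (if ∏ i ∈ D, x i = 1 then (1 : ℝ) else 0)
        = ∑ _x : Fin d → ℤˣ, (1 : ℝ) := by
      refine Finset.sum_congr rfl fun x _ => ?_
      rw [hD, Finset.prod_empty, if_pos rfl]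
    rw [this, sum_one_cube, if_pos hc, one_mul, ← mul_assoc, ← mul_pow]
    norm_num
  · have hD : D.Nonempty := by
      rw [Finset.filter_nonempty_iff]
      by_contra h
      push_neg at h
      exact hc (funext fun i => by simpa [c0] using h i (mem_univ i))
    rw [count_parity D hD, if_neg hc, ← mul_assoc]
    congr 1
    rw [div_mul_eq_mul_div, ← mul_pow]
    norm_num

/-- indicator of Aev-type constraint: pulled out of the x-sum. -/
lemma sum_x_VA (s : Fin d) (c : Fin d → Bool) :
    ∑ x : Fin d → ℤˣ, Set.indicator (Vev P ∩ Aev P s) (w P q) (x, c)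
      = (if c s = decide (s ∈ P)
          then (if c = c0 P then 1 else (1 : ℝ) / 2) * F P q c else 0) := by
  classical
  by_cases hA : c s = decide (s ∈ P)
  · rw [if_pos hA, ← sum_x_V]
    refine Finset.sum_congr rfl fun x _ => ?_
    by_cases hV : (x, c) ∈ Vev P
    · rw [Set.indicator_of_mem (show (x, c) ∈ Vev P ∩ Aev P s from ⟨hV, hA⟩),
        Set.indicator_of_mem hV]
    · rw [Set.indicator_of_notMem
        (show (x, c) ∉ Vev P ∩ Aev P s from fun hh => hV hh.1),
        Set.indicator_of_notMem hV]
  · rw [if_neg hA]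
    refine Finset.sum_eq_zero fun x _ => ?_
    exact Set.indicator_of_notMem
      (show (x, c) ∉ Vev P ∩ Aev P s from fun hh => hA hh.2) _

lemma sum_x_VAc (s : Fin d) (c : Fin d → Bool) :
    ∑ x : Fin d → ℤˣ, Set.indicator (Vev P ∩ (Aev P s)ᶜ) (w P q) (x, c)
      = (if c s = decide (s ∈ P) then 0
          else (if c = c0 P then 1 else (1 : ℝ) / 2) * F P q c) := by
  classical
  by_cases hA : c s = decide (s ∈ P)
  · rw [if_pos hA]
    refine Finset.sum_eq_zero fun x _ => ?_
    exact Set.indicator_of_notMem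
      (show (x, c) ∉ Vev P ∩ (Aev P s)ᶜ from fun hh => hh.2 hA) _
  · rw [if_neg hA, ← sum_x_V]
    refine Finset.sum_congr rfl fun x _ => ?_
    by_cases hV : (x, c) ∈ Vev P
    · rw [Set.indicator_of_mem (show (x, c) ∈ Vev P ∩ (Aev P s)ᶜ from ⟨hV, hA⟩),
        Set.indicator_of_mem hV]
    · rw [Set.indicator_of_notMem
        (show (x, c) ∉ Vev P ∩ (Aev P s)ᶜ from fun hh => hV hh.1),
        Set.indicator_of_notMem hV]

lemma sum_x_A (s : Fin d) (c : Fin d → Bool) :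
    ∑ x : Fin d → ℤˣ, Set.indicator (Aev P s) (w P q) (x, c)
      = (if c s = decide (s ∈ P) then F P q c else 0) := by
  classical
  by_cases hA : c s = decide (s ∈ P)
  · rw [if_pos hA, ← sum_x_w]
    exact Finset.sum_congr rfl fun x _ =>
      Set.indicator_of_mem (show (x, c) ∈ Aev P s from hA) _
  · rw [if_neg hA]
    exact Finset.sum_eq_zero fun x _ =>
      Set.indicator_of_notMem (show (x, c) ∉ Aev P s from hA) _

lemma sum_x_Ac (s : Fin d) (c : Fin d → Bool) :
    ∑ x : Fin d → ℤˣ, Set.indicator ((Aev P s)ᶜ) (w P q) (x, c)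
      = (if c s = decide (s ∈ P) then 0 else F P q c) := by
  classical
  by_cases hA : c s = decide (s ∈ P)
  · rw [if_pos hA]
    exact Finset.sum_eq_zero fun x _ =>
      Set.indicator_of_notMem (show (x, c) ∉ (Aev P s)ᶜ from fun hh => hh hA) _
  · rw [if_neg hA, ← sum_x_w]
    exact Finset.sum_congr rfl fun x _ =>
      Set.indicator_of_mem (show (x, c) ∈ (Aev P s)ᶜ from hA) _

lemma Pr_eq_sum (E : Set (Omega d)) :
    Pr P q E = ∑ c : Fin d → Bool, ∑ x : Fin d → ℤˣ, Set.indicator E (w P q) (x, c) := by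
  rw [Pr, Fintype.sum_prod_type]
  exact Finset.sum_comm

/-- key c-sum: conditional weight sum equals `q s`. -/
lemma sum_c_A (s : Fin d) :
    ∑ c : Fin d → Bool, (if c s = decide (s ∈ P) then F P q c else 0) = q s := by
  classical
  have key : ∀ c : Fin d → Bool, (if c s = decide (s ∈ P) then F P q c else 0)
      = ∏ i, ((if c i = decide (i ∈ P) then q i else 1 - q i)
          * (if i = s then (if c i = decide (i ∈ P) then 1 else 0) else 1)) := by
    intro c
    rw [Finset.prod_mul_distrib]
    have h2 : (∏ i, (if i = s then (if c i = decide (i ∈ P) then (1 : ℝ) else 0) else 1))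
        = (if c s = decide (s ∈ P) then (1 : ℝ) else 0) := by
      rw [Finset.prod_eq_single s (fun i _ hi => if_neg hi) (fun h => absurd (mem_univ s) h)]
      rw [if_pos rfl]
    rw [h2]
    by_cases h : c s = decide (s ∈ P) <;> simp [h, F]
  rw [Finset.sum_congr rfl fun c _ => key c,
    sum_bool_prod (fun i b => (if b = decide (i ∈ P) then q i else 1 - q i)
      * (if i = s then (if b = decide (i ∈ P) then 1 else 0) else 1))]
  have h3 : ∀ i : Fin d,
      ((if true = decide (i ∈ P) then q i else 1 - q i)
          * (if i = s then (if true = decide (i ∈ P) then (1 : ℝ) else 0) else 1))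
        + ((if false = decide (i ∈ P) then q i else 1 - q i)
          * (if i = s then (if false = decide (i ∈ P) then (1 : ℝ) else 0) else 1))
      = (if i = s then q i else 1) := by
    intro i
    by_cases hi : i = s <;> cases hP : decide (i ∈ P) <;> simp [hi, hP]
  rw [Finset.prod_congr rfl fun i _ => h3 i,
    Finset.prod_eq_single s (fun i _ hi => if_neg hi) (fun h => absurd (mem_univ s) h),
    if_pos rfl]

lemma sum_c_Ac (s : Fin d) :
    ∑ c : Fin d → Bool, (if c s = decide (s ∈ P) then 0 else F P q c) = 1 - q s := by
  classical
  have split : ∀ c : Fin d → Bool,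
      F P q c = (if c s = decide (s ∈ P) then F P q c else 0)
        + (if c s = decide (s ∈ P) then 0 else F P q c) := by
    intro c; by_cases h : c s = decide (s ∈ P) <;> simp [h]
  have hall : ∑ c : Fin d → Bool, F P q c = 1 := by
    unfold F
    rw [sum_bool_prod (fun i b => if b = decide (i ∈ P) then q i else 1 - q i)]
    rw [Finset.prod_congr rfl (fun i _ => ?_), Finset.prod_const_one]
    cases hP : decide (i ∈ P) <;> simp [hP]
  have := hall
  rw [Finset.sum_congr rfl fun c _ => split c, Finset.sum_add_distrib,
    sum_c_A P q s] at this
  linarith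

lemma Pr_A (s : Fin d) : Pr P q (Aev P s) = q s := by
  rw [Pr_eq_sum, Finset.sum_congr rfl fun c _ => sum_x_A P q s c, sum_c_A]

lemma Pr_Ac (s : Fin d) : Pr P q ((Aev P s)ᶜ) = 1 - q s := by
  rw [Pr_eq_sum, Finset.sum_congr rfl fun c _ => sum_x_Ac P q s c, sum_c_Ac]

lemma Pr_VA (s : Fin d) :
    Pr P q (Vev P ∩ Aev P s) = (1 / 2) * (q s + ∏ i, q i) := by
  classical
  rw [Pr_eq_sum, Finset.sum_congr rfl fun c _ => sum_x_VA P q s c]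
  have key : ∀ c : Fin d → Bool,
      (if c s = decide (s ∈ P)
          then (if c = c0 P then 1 else (1 : ℝ) / 2) * F P q c else 0)
      = (1 / 2) * (if c s = decide (s ∈ P) then F P q c else 0)
        + (if c = c0 P then (1 / 2) * F P q c else 0) := by
    intro c
    by_cases hc : c = c0 P
    · subst hc
      have hA : c0 P s = decide (s ∈ P) := rfl
      rw [if_pos hA, if_pos hA, if_pos (rfl : c0 P = c0 P), if_pos (rfl : c0 P = c0 P)]
      ring
    · by_cases hA : c s = decide (s ∈ P) <;> simp [hc, hA]
  rw [Finset.sum_congr rfl fun c _ => key c, Finset.sum_add_distrib, ← Finset.mul_sum,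
    sum_c_A P q s, Finset.sum_ite_eq' univ (c0 P) (fun c => (1 / 2) * F P q c),
    if_pos (mem_univ _), F_c0]
  ring

lemma Pr_VAc (s : Fin d) :
    Pr P q (Vev P ∩ (Aev P s)ᶜ) = (1 / 2) * (1 - q s) := by
  classical
  rw [Pr_eq_sum, Finset.sum_congr rfl fun c _ => sum_x_VAc P q s c]
  have key : ∀ c : Fin d → Bool,
      (if c s = decide (s ∈ P) then 0
          else (if c = c0 P then 1 else (1 : ℝ) / 2) * F P q c)
      = (1 / 2) * (if c s = decide (s ∈ P) then 0 else F P q c) := by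
    intro c
    by_cases hA : c s = decide (s ∈ P)
    · simp [hA]
    · have hc : c ≠ c0 P := fun h => hA (by rw [h]; rfl)
      simp [hA, hc]
  rw [Finset.sum_congr rfl fun c _ => key c, ← Finset.mul_sum, sum_c_Ac P q s]

end Marginals

/-- `Pr(V | c_s = 1[s∈P]) = (1/2)(1 + ∏_{i≠s} q_i)`,
`Pr(V | c_s ≠ 1[s∈P]) = 1/2` (when `q_s < 1`), hence the task-advantage ratio of the
correct choice at step `s` is `1 + ∏_{i≠s} q_i`, and in the uniform case `q_i = 1/2`
it equals `1 + 2^{−(d−1)}` at every step. -/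
theorem stmt2 (d : ℕ) (hd : 1 ≤ d) (P : Finset (Fin d)) (q : Fin d → ℝ)
    (hq : ∀ i, 0 < q i ∧ q i ≤ 1) :
    (∀ s : Fin d,
      Pr P q (Vev P ∩ Aev P s) / Pr P q (Aev P s)
        = (1 / 2) * (1 + ∏ i ∈ univ.erase s, q i))
    ∧ (∀ s : Fin d, q s < 1 →
      Pr P q (Vev P ∩ (Aev P s)ᶜ) / Pr P q ((Aev P s)ᶜ) = 1 / 2)
    ∧ (∀ s : Fin d, q s < 1 →
      (Pr P q (Vev P ∩ Aev P s) / Pr P q (Aev P s))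
          / (Pr P q (Vev P ∩ (Aev P s)ᶜ) / Pr P q ((Aev P s)ᶜ))
        = 1 + ∏ i ∈ univ.erase s, q i)
    ∧ ((∀ i, q i = 1 / 2) → ∀ s : Fin d,
      (Pr P q (Vev P ∩ Aev P s) / Pr P q (Aev P s))
          / (Pr P q (Vev P ∩ (Aev P s)ᶜ) / Pr P q ((Aev P s)ᶜ))
        = 1 + (1 / 2 : ℝ) ^ (d - 1)) := by
  have h1 : ∀ s : Fin d,
      Pr P q (Vev P ∩ Aev P s) / Pr P q (Aev P s)
        = (1 / 2) * (1 + ∏ i ∈ univ.erase s, q i) := by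
    intro s
    have hqs : q s ≠ 0 := ne_of_gt (hq s).1
    have hsplit : ∏ i, q i = q s * ∏ i ∈ univ.erase s, q i :=
      (Finset.mul_prod_erase univ q (mem_univ s)).symm
    rw [Pr_VA, Pr_A, hsplit]
    field_simp
  have h2 : ∀ s : Fin d, q s < 1 →
      Pr P q (Vev P ∩ (Aev P s)ᶜ) / Pr P q ((Aev P s)ᶜ) = 1 / 2 := by
    intro s hs
    have h : (1 : ℝ) - q s ≠ 0 := by linarith
    rw [Pr_VAc, Pr_Ac, mul_div_assoc, div_self h, mul_one]
  have h3 : ∀ s : Fin d, q s < 1 →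
      (Pr P q (Vev P ∩ Aev P s) / Pr P q (Aev P s))
          / (Pr P q (Vev P ∩ (Aev P s)ᶜ) / Pr P q ((Aev P s)ᶜ))
        = 1 + ∏ i ∈ univ.erase s, q i := by
    intro s hs
    rw [h1 s, h2 s hs]
    field_simp
  refine ⟨h1, h2, h3, ?_⟩
  intro hu s
  have hs : q s < 1 := by rw [hu s]; norm_num
  rw [h3 s hs]
  congr 1
  rw [Finset.prod_congr rfl (fun i _ => hu i), Finset.prod_const,
    Finset.card_erase_of_mem (mem_univ s), Finset.card_univ, Fintype.card_fin]

end Stmt2
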